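/- For a filtered object V the two canonical morphisms from V̂ to its double completion — the unit r_{V̂} : V̂ → (V̂)^∧ and the completion of the unit, (r_V)^∧ : V̂ → (V̂)^∧ — coincide. -/

import Mathlib

/-!
STATEMENT 3: For a filtered object `V` the two canonical morphisms from `V̂` to its double
completion — the unit `r_{V̂} : V̂ → (V̂)^∧` and the completion of the unit
`(r_V)^∧ : V̂ → (V̂)^∧` — coincide.
-/

open CategoryTheory CategoryTheory.Limits Opposite

universe v u

variable {A : Type u} [Category.{v} A] [Abelian A]
  [HasCoproducts A] [AB4 A] [HasLimitsOfShape ℕᵒᵖ A]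

/-- A filtered object: an `ℕᵒᵖ`-indexed diagram all of whose structure maps are monos. -/
def IsFilteredObj (V : ℕᵒᵖ ⥤ A) : Prop :=
  ∀ {a b : ℕᵒᵖ} (f : a ⟶ b), Mono (V.map f)

/-- The diagram `a ↦ coker (i_a : F_a V ⟶ F_0 V)`. -/
noncomputable def cokerDiagram (V : ℕᵒᵖ ⥤ A) : ℕᵒᵖ ⥤ A where
  obj a := cokernel (V.map (homOfLE (Nat.zero_le a.unop)).op)
  map {a b} f := cokernel.map _ _ (V.map f) (𝟙 _) (by
    rw [Category.comp_id, ← V.map_comp]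
    congr 1)
  map_id := by intro a; ext; simp
  map_comp := by intro a b c f g; ext; simp

/-- The completion `V̂` of a filtered object, with `F_e V̂ = ker (lim_a coker i_a → coker i_e)`. -/
noncomputable def completion (V : ℕᵒᵖ ⥤ A) : ℕᵒᵖ ⥤ A where
  obj e := kernel (limit.π (cokerDiagram V) e)
  map {a b} f := kernel.lift _ (kernel.ι _) (by
    rw [← limit.w (cokerDiagram V) f, ← Category.assoc, kernel.condition, zero_comp])
  map_id := by intro a; ext; simp
  map_comp := by intro a b c f g; ext; simp

/-- The canonical map `F₀ W ⟶ lim_a coker (F_a W → F₀ W)`. -/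
noncomputable def toCompletionZero (W : ℕᵒᵖ ⥤ A) : W.obj (op 0) ⟶ limit (cokerDiagram W) :=
  limit.lift _
    { pt := W.obj (op 0)
      π :=
        { app := fun _ => cokernel.π _
          naturality := by
            intro a b f
            simp [cokerDiagram, cokernel.map] } }

/-- A filtered object is complete when the canonical map
`F₀ W → lim_a coker (F_a W → F₀ W)` is an isomorphism. -/
def IsCompleteObj (W : ℕᵒᵖ ⥤ A) : Prop := IsIso (toCompletionZero W)

/-- The canonical (unit) morphism `r : V ⟶ V̂`. -/
noncomputable def unitMap (V : ℕᵒᵖ ⥤ A) : V ⟶ completion V where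
  app e := kernel.lift _ (V.map (homOfLE (Nat.zero_le e.unop)).op ≫ toCompletionZero V) (by
    rw [Category.assoc]
    have : toCompletionZero V ≫ limit.π (cokerDiagram V) e = cokernel.π _ := by
      first
        | exact limit.lift_π _ _
        | (simp [toCompletionZero] <;> rfl)
    rw [this]
    exact cokernel.condition _)
  naturality := by
    intro a b f
    dsimp only [completion]
    ext
    simp only [Category.assoc, kernel.lift_ι, kernel.lift_ι_assoc]
    rw [← Category.assoc, ← V.map_comp]
    congr 2

/-- The morphism of `coker`-diagrams induced by a morphism of filtered objects. -/
noncomputable def cokerDiagramMap {V W : ℕᵒᵖ ⥤ A} (φ : V ⟶ W) :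
    cokerDiagram V ⟶ cokerDiagram W where
  app e := cokernel.map _ _ (φ.app _) (φ.app _) (φ.naturality _)
  naturality := by
    intro a b f
    dsimp only [cokerDiagram]
    ext
    simp [φ.naturality]

/-- The completion of a morphism of filtered objects. -/
noncomputable def completionHom {V W : ℕᵒᵖ ⥤ A} (φ : V ⟶ W) :
    completion V ⟶ completion W where
  app e := kernel.lift _ (kernel.ι _ ≫ limMap (cokerDiagramMap φ)) (by
    first
      | (erw [Category.assoc, limMap_π, ← Category.assoc, kernel.condition, zero_comp])
      | (simp only [Category.assoc, limMap_π]
         erw [← Category.assoc, kernel.condition, zero_comp]))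
  naturality := by
    intro a b f
    dsimp only [completion]
    ext
    simp

lemma tcz_pi (V : ℕᵒᵖ ⥤ A) (a : ℕᵒᵖ) :
    toCompletionZero V ≫ limit.π (cokerDiagram V) a
      = cokernel.π (V.map (homOfLE (Nat.zero_le a.unop)).op) := by
  simp [toCompletionZero]; rfl

lemma unit_zero_ι (V : ℕᵒᵖ ⥤ A) :
    (unitMap V).app (op 0) ≫ kernel.ι (limit.π (cokerDiagram V) (op 0))
      = toCompletionZero V := by
  have h : (homOfLE (Nat.zero_le ((op (0:ℕ)).unop))).op = 𝟙 (op (0:ℕ)) := rfl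
  simp [unitMap, h]
  exact kernel.lift_ι _ _ _

lemma compl_map_ι (V : ℕᵒᵖ ⥤ A) {a b : ℕᵒᵖ} (f : a ⟶ b) :
    (completion V).map f ≫ kernel.ι (limit.π (cokerDiagram V) b)
      = kernel.ι (limit.π (cokerDiagram V) a) := by
  simp [completion]

lemma key (V : ℕᵒᵖ ⥤ A) (a : ℕᵒᵖ) :
    kernel.ι (limit.π (cokerDiagram V) (op 0)) ≫ limit.π (cokerDiagram V) a ≫
        (cokerDiagramMap (unitMap V)).app a
      = cokernel.π ((completion V).map (homOfLE (Nat.zero_le a.unop)).op) := by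
  have h1 : (unitMap V).app (op 0) ≫ kernel.ι (limit.π (cokerDiagram V) (op 0)) ≫
      limit.π (cokerDiagram V) a = cokernel.π (V.map (homOfLE (Nat.zero_le a.unop)).op) := by
    exact (Category.assoc _ _ _).symm.trans
      ((congrArg (· ≫ limit.π (cokerDiagram V) a) (unit_zero_ι V)).trans (tcz_pi V a))
  have hmap : cokernel.π (V.map (homOfLE (Nat.zero_le a.unop)).op) ≫
        (cokerDiagramMap (unitMap V)).app a
      = (unitMap V).app (op 0) ≫
        cokernel.π ((completion V).map (homOfLE (Nat.zero_le a.unop)).op) := by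
    simp [cokerDiagramMap]
    exact cokernel.π_desc _ _ _
  set q := cokernel.π (V.map (homOfLE (Nat.zero_le a.unop)).op) with hqdef
  set t : kernel (limit.π (cokerDiagram V) (op 0)) ⟶
      cokernel (V.map (homOfLE (Nat.zero_le a.unop)).op) := kernel.ι (limit.π (cokerDiagram V) (op 0)) ≫ limit.π (cokerDiagram V) a with htdef
  set u₀ : V.obj (op 0) ⟶ kernel (limit.π (cokerDiagram V) (op 0)) := (unitMap V).app (op 0) with hudef
  have ht2 : ∀ {X : A} (w : X ⟶ kernel (limit.π (cokerDiagram V) (op 0))),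
      w ≫ t = w ≫ kernel.ι (limit.π (cokerDiagram V) (op 0)) ≫ limit.π (cokerDiagram V) a := by
    intro X w; rw [htdef]; rfl
  haveI : Epi (pullback.snd q t) := Abelian.epi_pullback_of_epi_f q t
  refine (cancel_epi (pullback.snd q t)).1 ?_
  have hz0 : (((pullback.fst q t ≫ u₀ :
        pullback q t ⟶ kernel (limit.π (cokerDiagram V) (op 0))) - pullback.snd q t) ≫
      kernel.ι (limit.π (cokerDiagram V) (op 0))) ≫ limit.π (cokerDiagram V) a = 0 := by
    rw [Category.assoc, Preadditive.sub_comp]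
    rw [← ht2 (pullback.fst q t ≫ u₀), ← ht2 (pullback.snd q t)]
    have h1' : u₀ ≫ t = q := (ht2 u₀).trans h1
    rw [Category.assoc, h1', ← pullback.condition]; exact sub_self _
  obtain ⟨z, hz⟩ : ∃ z : pullback q t ⟶ kernel (limit.π (cokerDiagram V) a),
      (z ≫ (completion V).map (homOfLE (Nat.zero_le a.unop)).op :
        pullback q t ⟶ kernel (limit.π (cokerDiagram V) (op 0)))
      = ((pullback.fst q t ≫ u₀ :
          pullback q t ⟶ kernel (limit.π (cokerDiagram V) (op 0))) - pullback.snd q t) := by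
    refine ⟨kernel.lift (limit.π (cokerDiagram V) a)
      (((pullback.fst q t ≫ u₀ :
        pullback q t ⟶ kernel (limit.π (cokerDiagram V) (op 0))) - pullback.snd q t) ≫
        kernel.ι (limit.π (cokerDiagram V) (op 0))) hz0, ?_⟩
    refine (cancel_mono (kernel.ι (limit.π (cokerDiagram V) (op 0)))).1 ?_
    exact (Category.assoc _ _ _).trans ((congrArg (_ ≫ ·) (compl_map_ι V _)).trans
      (kernel.lift_ι _ _ _))
  have h6 : (((pullback.fst q t ≫ u₀ :
        pullback q t ⟶ kernel (limit.π (cokerDiagram V) (op 0))) - pullback.snd q t)) ≫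
      cokernel.π ((completion V).map (homOfLE (Nat.zero_le a.unop)).op) = 0 := by
    rw [← hz]
    exact (Category.assoc _ _ _).trans ((congrArg (_ ≫ ·) (cokernel.condition _)).trans
      comp_zero)
  replace h6 := (Preadditive.sub_comp _ _ _).symm.trans h6
  calc pullback.snd q t ≫ kernel.ι (limit.π (cokerDiagram V) (op 0)) ≫
        limit.π (cokerDiagram V) a ≫ (cokerDiagramMap (unitMap V)).app a
      = (pullback.snd q t ≫ t) ≫ (cokerDiagramMap (unitMap V)).app a := by
        rw [ht2]; exact (congrArg (_ ≫ ·) (Category.assoc _ _ _)).symm.trans (Category.assoc _ _ _).symm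
    _ = pullback.fst q t ≫ q ≫ (cokerDiagramMap (unitMap V)).app a := by
        rw [← pullback.condition]; exact Category.assoc _ _ _
    _ = (pullback.fst q t ≫ u₀ ≫
          cokernel.π ((completion V).map (homOfLE (Nat.zero_le a.unop)).op) :
          pullback q t ⟶ (cokerDiagram (completion V)).obj a) := by
        rw [hmap]; rfl
    _ = (pullback.snd q t ≫ cokernel.π ((completion V).map (homOfLE (Nat.zero_le a.unop)).op) :
          pullback q t ⟶ (cokerDiagram (completion V)).obj a) := by
        exact (Category.assoc _ _ _).symm.trans (sub_eq_zero.mp h6)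

lemma unit_app_ι (W : ℕᵒᵖ ⥤ A) (e : ℕᵒᵖ) :
    (unitMap W).app e ≫ kernel.ι (limit.π (cokerDiagram W) e)
      = W.map (homOfLE (Nat.zero_le e.unop)).op ≫ toCompletionZero W := by
  simp [unitMap]
  exact kernel.lift_ι _ _ _

lemma complHom_app_ι {V W : ℕᵒᵖ ⥤ A} (φ : V ⟶ W) (e : ℕᵒᵖ) :
    (completionHom φ).app e ≫ kernel.ι (limit.π (cokerDiagram W) e)
      = kernel.ι (limit.π (cokerDiagram V) e) ≫ limMap (cokerDiagramMap φ) := by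
  simp [completionHom]
  exact kernel.lift_ι _ _ _


/-- The unit of the completion at `V̂` coincides with the completion of the unit at `V`:
`r_{V̂} = (r_V)^∧ : V̂ ⟶ (V̂)^∧`. -/
theorem statement3 (V : ℕᵒᵖ ⥤ A) (hV : IsFilteredObj V) :
    unitMap (completion V) = completionHom (unitMap V) := by
  ext e : 2
  refine (cancel_mono (kernel.ι (limit.π (cokerDiagram (completion V)) e))).1 ?_
  refine (unit_app_ι _ _).trans (Eq.trans ?_ (complHom_app_ι _ _).symm)
  apply limit.hom_ext
  intro a
  simp only [Category.assoc, limMap_π]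
  rw [tcz_pi (completion V) a]
  rw [← compl_map_ι V ((homOfLE (Nat.zero_le e.unop)).op)]
  exact ((congrArg (_ ≫ ·) (key V a)).symm.trans (Category.assoc _ _ _).symm).trans
    ((congrArg (_ ≫ ·) (limMap_π _ _)).symm.trans (Category.assoc _ _ _).symm)
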